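/- Let ρ: G → U(V) and ρ': G → U(V') be non-isomorphic irreducible unitary representations of a compact group G, with at least one finite-dimensional. Then any two matrix coefficients ρ^{u,v}(g) = conj(⟨u, ρ(g)v⟩) and ρ'^{u',v'}(g) = conj(⟨u', ρ'(g)v'⟩) are orthogonal in L²(G): ∫_G conj(ρ^{u,v}(g)) · ρ'^{u',v'}(g) dg = 0. -/

import Mathlib

open MeasureTheory

-- Schur's lemma: an equivariant continuous linear map between non-isomorphic irreps is 0
theorem schur_aux
    {K : Type*} [RCLike K]
    {G : Type*} [Group G]
    {V : Type*} [NormedAddCommGroup V] [InnerProductSpace K V] [CompleteSpace V] [Nontrivial V]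
    {V' : Type*} [NormedAddCommGroup V'] [InnerProductSpace K V'] [CompleteSpace V']
    [Nontrivial V']
    (ρ : G →* (V →L[K] V)) (ρ' : G →* (V' →L[K] V'))
    (hρu : ∀ (g : G) (v w : V), inner K (ρ g v) (ρ g w) = (inner K v w : K))
    (hρ'u : ∀ (g : G) (v w : V'), inner K (ρ' g v) (ρ' g w) = (inner K v w : K))
    (hVirr : ∀ W : Submodule K V, IsClosed (W : Set V) →
      (∀ (g : G) (v : V), v ∈ W → ρ g v ∈ W) → W = ⊥ ∨ W = ⊤)
    (hV'irr : ∀ W : Submodule K V', IsClosed (W : Set V') →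
      (∀ (g : G) (v : V'), v ∈ W → ρ' g v ∈ W) → W = ⊥ ∨ W = ⊤)
    (hfd : FiniteDimensional K V ∨ FiniteDimensional K V')
    (hniso : ¬ ∃ e : V ≃ₗᵢ[K] V', ∀ (g : G) (v : V), e (ρ g v) = ρ' g (e v))
    (T : V' →L[K] V) (hT : ∀ (g : G) (x : V'), T (ρ' g x) = ρ g (T x)) :
    T = 0 := by
  classical
  -- basic facts about ρ, ρ'
  have hρinv : ∀ (g : G) (x : V), ρ g (ρ g⁻¹ x) = x := by
    intro g x
    have : ρ g * ρ g⁻¹ = 1 := by rw [← map_mul, mul_inv_cancel, map_one]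
    calc ρ g (ρ g⁻¹ x) = (ρ g * ρ g⁻¹) x := rfl
      _ = x := by rw [this]; rfl
  have hρ'inv : ∀ (g : G) (x : V'), ρ' g (ρ' g⁻¹ x) = x := by
    intro g x
    have : ρ' g * ρ' g⁻¹ = 1 := by rw [← map_mul, mul_inv_cancel, map_one]
    calc ρ' g (ρ' g⁻¹ x) = (ρ' g * ρ' g⁻¹) x := rfl
      _ = x := by rw [this]; rfl
  have hρadj : ∀ (g : G) (a b : V), (inner K (ρ g a) b : K) = inner K a (ρ g⁻¹ b) := by
    intro g a b
    conv_lhs => rw [← hρinv g b]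
    rw [hρu]
  have hρ'adj : ∀ (g : G) (a b : V'), (inner K (ρ' g a) b : K) = inner K a (ρ' g⁻¹ b) := by
    intro g a b
    conv_lhs => rw [← hρ'inv g b]
    rw [hρ'u]
  -- the kernel of T is invariant
  have hker := hV'irr (LinearMap.ker (T : V' →ₗ[K] V)) (ContinuousLinearMap.isClosed_ker T) (by
    intro g x hx
    simp only [LinearMap.mem_ker, ContinuousLinearMap.coe_coe] at hx ⊢
    rw [hT, hx, map_zero])
  rcases hker with hker | hker
  swap
  · ext x
    have : x ∈ LinearMap.ker (T : V' →ₗ[K] V) := hker ▸ Submodule.mem_top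
    simpa using this
  have hinj : Function.Injective T := by
    rw [← ContinuousLinearMap.coe_coe T, ← LinearMap.ker_eq_bot]
    exact_mod_cast hker
  -- the closure of the range of T is invariant
  have hrange := hVirr (LinearMap.range (T : V' →ₗ[K] V)).topologicalClosure
    (LinearMap.range (T : V' →ₗ[K] V)).isClosed_topologicalClosure (by
      intro g x hx
      have hmapsto : Set.MapsTo (ρ g) (LinearMap.range (T : V' →ₗ[K] V) : Set V)
          ((LinearMap.range (T : V' →ₗ[K] V)).topologicalClosure : Set V) := by
        rintro _ ⟨y, rfl⟩
        exact Submodule.le_topologicalClosure _ ⟨ρ' g y, (hT g y).symm ▸ rfl⟩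
      have := (hmapsto.closure (ρ g).continuous) hx
      rwa [IsClosed.closure_eq ((LinearMap.range (T : V' →ₗ[K] V)).isClosed_topologicalClosure)]
        at this)
  rcases hrange with hrange | hrange
  · -- then range is trivial, so T = 0
    ext x
    have : T x ∈ (LinearMap.range (T : V' →ₗ[K] V)).topologicalClosure :=
      Submodule.le_topologicalClosure _ ⟨x, rfl⟩
    rw [hrange] at this
    simpa using this
  -- dense range and injective; derive contradiction
  exfalso
  -- both spaces are finite dimensional and T is surjective
  have hfd' : FiniteDimensional K V' := by
    rcases hfd with h | h
    · exact FiniteDimensional.of_injective (T : V' →ₗ[K] V) hinj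
    · exact h
  have hclosed : IsClosed ((LinearMap.range (T : V' →ₗ[K] V)) : Set V) :=
    Submodule.closed_of_finiteDimensional _
  have hrange' : LinearMap.range (T : V' →ₗ[K] V) = ⊤ := by
    rw [← hclosed.submodule_topologicalClosure_eq]; exact hrange
  have hsurj : Function.Surjective T :=
    LinearMap.range_eq_top.mp hrange'
  -- A = T† ∘ T is symmetric and commutes with ρ'
  set A : V' →L[K] V' := (ContinuousLinearMap.adjoint T).comp T with hA
  have hAsymm : (A : V' →ₗ[K] V').IsSymmetric := by
    intro x y
    show (inner K (ContinuousLinearMap.adjoint T (T x)) y : K)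
      = inner K x (ContinuousLinearMap.adjoint T (T y))
    rw [ContinuousLinearMap.adjoint_inner_left, ContinuousLinearMap.adjoint_inner_right]
  have hAinner : ∀ x y : V', (inner K x (A y) : K) = inner K (T x) (T y) := by
    intro x y
    show (inner K x (ContinuousLinearMap.adjoint T (T y)) : K) = inner K (T x) (T y)
    rw [ContinuousLinearMap.adjoint_inner_right]
  have hρ'adj' : ∀ (g : G) (a b : V'), (inner K a (ρ' g b) : K) = inner K (ρ' g⁻¹ a) b := by
    intro g a b
    conv_lhs => rw [← hρ'inv g a]
    rw [hρ'u]
  have hρadj' : ∀ (g : G) (a b : V), (inner K a (ρ g b) : K) = inner K (ρ g⁻¹ a) b := by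
    intro g a b
    conv_lhs => rw [← hρinv g a]
    rw [hρu]
  have hcomm : ∀ (g : G) (x : V'), A (ρ' g x) = ρ' g (A x) := by
    intro g x
    apply ext_inner_left K
    intro y
    rw [hρ'adj' g y (A x), hAinner y (ρ' g x), hAinner (ρ' g⁻¹ y) x, hT, hρadj', ← hT]
  -- A has an eigenvalue c
  obtain ⟨c, hc⟩ : ∃ c : ℝ, Module.End.HasEigenvalue (A : V' →ₗ[K] V') ((c : K)) :=
    ⟨_, hAsymm.hasEigenvalue_iSup_of_finiteDimensional⟩
  -- the eigenspace is invariant, closed, nonzero, hence everything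
  have hE := hV'irr (Module.End.eigenspace (A : V' →ₗ[K] V') (c : K))
    (Submodule.closed_of_finiteDimensional _) (by
      intro g x hx
      rw [Module.End.mem_eigenspace_iff] at hx ⊢
      have hx' : A x = (c : K) • x := hx
      show A (ρ' g x) = (c : K) • ρ' g x
      rw [hcomm, hx', _root_.map_smul])
  rcases hE with hE | hE
  · exact hc hE
  have hAeq : ∀ x : V', A x = (c : K) • x := by
    intro x
    have : x ∈ Module.End.eigenspace (A : V' →ₗ[K] V') (c : K) := hE ▸ Submodule.mem_top
    rwa [Module.End.mem_eigenspace_iff] at this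
  -- norm identity : ‖T x‖ ^ 2 = c * ‖x‖ ^ 2
  have hnorm : ∀ x : V', ‖T x‖ ^ 2 = c * ‖x‖ ^ 2 := by
    intro x
    have h1 : (inner K (T x) (T x) : K) = (c : K) * inner K x x := by
      rw [← hAinner, hAeq, inner_smul_right]
    have h2 := congrArg RCLike.re h1
    rw [inner_self_eq_norm_sq (𝕜 := K), RCLike.mul_re, RCLike.ofReal_re, RCLike.ofReal_im,
      zero_mul, sub_zero, inner_self_eq_norm_sq (𝕜 := K) (x := x)] at h2
    exact h2
  -- c is positive
  obtain ⟨x₀, hx₀⟩ : ∃ x : V', x ≠ 0 := exists_ne 0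
  have hTx₀ : T x₀ ≠ 0 := fun h => hx₀ (hinj (by simpa using h))
  have hcpos : 0 < c := by
    have h1 : 0 < ‖T x₀‖ ^ 2 := pow_pos (norm_pos_iff.2 hTx₀) 2
    have h2 : 0 < ‖x₀‖ ^ 2 := pow_pos (norm_pos_iff.2 hx₀) 2
    nlinarith [hnorm x₀]
  -- T rescaled is an isometry
  have hsqrt : Real.sqrt c > 0 := Real.sqrt_pos.2 hcpos
  have hTnorm : ∀ x : V', ‖T x‖ = Real.sqrt c * ‖x‖ := by
    intro x
    rw [← Real.sqrt_sq (norm_nonneg (T x)), hnorm x, Real.sqrt_mul hcpos.le,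
      Real.sqrt_sq (norm_nonneg x)]
  set s : K := (((Real.sqrt c)⁻¹ : ℝ) : K) with hsdef
  have hs : ‖s‖ = (Real.sqrt c)⁻¹ := by
    rw [RCLike.norm_ofReal, abs_of_pos (by positivity)]
  have hsne : s ≠ 0 := by
    simp only [s, ne_eq, RCLike.ofReal_eq_zero]
    positivity
  set L : V' →ₗᵢ[K] V := ⟨s • (T : V' →ₗ[K] V), by
    intro x
    show ‖s • T x‖ = ‖x‖
    rw [norm_smul, hs, hTnorm]
    field_simp⟩ with hL
  have hLapp : ∀ x : V', L x = s • T x := fun _ => rfl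
  have hLsurj : Function.Surjective L := by
    intro y
    obtain ⟨x, hx⟩ := hsurj (s⁻¹ • y)
    exact ⟨x, by rw [hLapp, hx, smul_smul, mul_inv_cancel₀ hsne, one_smul]⟩
  set E : V' ≃ₗᵢ[K] V := LinearIsometryEquiv.ofSurjective L hLsurj with hEdef
  have hEapp : ∀ x : V', E x = s • T x := fun x => by
    rw [hEdef, LinearIsometryEquiv.coe_ofSurjective]
    exact hLapp x
  apply hniso
  refine ⟨E.symm, fun g w => ?_⟩
  apply E.injective
  rw [LinearIsometryEquiv.apply_symm_apply, hEapp, hT, ← _root_.map_smul (ρ g), ← hEapp,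
    LinearIsometryEquiv.apply_symm_apply]

/-- **Schur orthogonality.**
Matrix coefficients of non-isomorphic irreducible unitary representations of a compact group
(at least one of which is finite-dimensional) are orthogonal in `L²(G)`:
`∫ conj(ρ^{u,v}(g)) · ρ'^{u',v'}(g) dg = 0`, where `ρ^{u,v}(g) = conj ⟪u, ρ(g)v⟫`. -/
theorem schur_orthogonality
    {K : Type*} [RCLike K]
    {G : Type*} [Group G] [TopologicalSpace G] [IsTopologicalGroup G] [CompactSpace G]
    [MeasurableSpace G] [BorelSpace G]
    (μ : Measure G) [IsProbabilityMeasure μ] [μ.IsMulLeftInvariant] [μ.IsMulRightInvariant]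
    {V : Type*} [NormedAddCommGroup V] [InnerProductSpace K V] [CompleteSpace V] [Nontrivial V]
    {V' : Type*} [NormedAddCommGroup V'] [InnerProductSpace K V'] [CompleteSpace V']
    [Nontrivial V']
    (ρ : G →* (V →L[K] V)) (ρ' : G →* (V' →L[K] V'))
    (hρc : ∀ v : V, Continuous fun g : G => ρ g v)
    (hρ'c : ∀ v : V', Continuous fun g : G => ρ' g v)
    (hρu : ∀ (g : G) (v w : V), inner K (ρ g v) (ρ g w) = (inner K v w : K))
    (hρ'u : ∀ (g : G) (v w : V'), inner K (ρ' g v) (ρ' g w) = (inner K v w : K))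
    (hVirr : ∀ W : Submodule K V, IsClosed (W : Set V) →
      (∀ (g : G) (v : V), v ∈ W → ρ g v ∈ W) → W = ⊥ ∨ W = ⊤)
    (hV'irr : ∀ W : Submodule K V', IsClosed (W : Set V') →
      (∀ (g : G) (v : V'), v ∈ W → ρ' g v ∈ W) → W = ⊥ ∨ W = ⊤)
    (hfd : FiniteDimensional K V ∨ FiniteDimensional K V')
    (hniso : ¬ ∃ e : V ≃ₗᵢ[K] V', ∀ (g : G) (v : V), e (ρ g v) = ρ' g (e v))
    (u v : V) (u' v' : V') :
    ∫ g, (starRingEnd K) ((starRingEnd K) (inner K u (ρ g v)))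
        * (starRingEnd K) (inner K u' (ρ' g v')) ∂μ = 0 := by
  classical
  letI : NormedSpace ℝ V := NormedSpace.restrictScalars ℝ K V
  -- composition identities
  have hρmul : ∀ (g₁ g₂ : G) (x : V), ρ g₁ (ρ g₂ x) = ρ (g₁ * g₂) x := by
    intro g₁ g₂ x
    rw [map_mul]; rfl
  have hρ'mul : ∀ (g₁ g₂ : G) (x : V'), ρ' g₁ (ρ' g₂ x) = ρ' (g₁ * g₂) x := by
    intro g₁ g₂ x
    rw [map_mul]; rfl
  -- norms are preserved
  have hunorm : ∀ (g : G) (w : V), ‖ρ g w‖ = ‖w‖ := by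
    intro g w
    have h := congrArg RCLike.re (hρu g w w)
    rw [inner_self_eq_norm_sq (𝕜 := K), inner_self_eq_norm_sq (𝕜 := K)] at h
    nlinarith [norm_nonneg (ρ g w), norm_nonneg w]
  have hu'norm : ∀ (g : G) (w : V'), ‖ρ' g w‖ = ‖w‖ := by
    intro g w
    have h := congrArg RCLike.re (hρ'u g w w)
    rw [inner_self_eq_norm_sq (𝕜 := K), inner_self_eq_norm_sq (𝕜 := K)] at h
    nlinarith [norm_nonneg (ρ' g w), norm_nonneg w]
  -- the integrand family is integrable
  have hint : ∀ x : V', Integrable (fun g : G => (inner K (ρ' g v') x : K) • ρ g v) μ := by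
    intro x
    have hcont : Continuous fun g : G => (inner K (ρ' g v') x : K) • ρ g v :=
      ((hρ'c v').inner continuous_const).smul (hρc v)
    exact hcont.integrable_of_hasCompactSupport (isClosed_tsupport _).isCompact
  -- the averaged operator
  set Tlin : V' →ₗ[K] V :=
    { toFun := fun x => ∫ g, (inner K (ρ' g v') x : K) • ρ g v ∂μ
      map_add' := by
        intro x y
        simp only [inner_add_right, add_smul]
        exact integral_add (hint x) (hint y)
      map_smul' := by
        intro c x
        simp only [inner_smul_right, mul_smul, RingHom.id_apply]
        exact integral_smul c _ } with hTlin
  have hTbound : ∀ x : V', ‖Tlin x‖ ≤ (‖v'‖ * ‖v‖) * ‖x‖ := by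
    intro x
    have h1 : ‖Tlin x‖ ≤ ∫ g, ‖(inner K (ρ' g v') x : K) • ρ g v‖ ∂μ :=
      norm_integral_le_integral_norm _
    have h2 : ∫ g, ‖(inner K (ρ' g v') x : K) • ρ g v‖ ∂μ ≤ ∫ _g, ‖v'‖ * ‖v‖ * ‖x‖ ∂μ := by
      apply integral_mono_of_nonneg
      · filter_upwards with g; positivity
      · exact integrable_const _
      · filter_upwards with g
        rw [norm_smul, hunorm]
        calc ‖(inner K (ρ' g v') x : K)‖ * ‖v‖ ≤ ‖ρ' g v'‖ * ‖x‖ * ‖v‖ := by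
              have := norm_inner_le_norm (𝕜 := K) (ρ' g v') x
              nlinarith [norm_nonneg v]
          _ = ‖v'‖ * ‖v‖ * ‖x‖ := by rw [hu'norm]; ring

    have h3 : ∫ _g, ‖v'‖ * ‖v‖ * ‖x‖ ∂μ = ‖v'‖ * ‖v‖ * ‖x‖ := by
      simp [integral_const, measure_univ]
    linarith
  set T : V' →L[K] V := Tlin.mkContinuous (‖v'‖ * ‖v‖) hTbound with hTdef
  have hTapp : ∀ x : V', T x = ∫ g, (inner K (ρ' g v') x : K) • ρ g v ∂μ := fun _ => rfl
  -- equivariance of T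
  have hTequi : ∀ (h : G) (x : V'), T (ρ' h x) = ρ h (T x) := by
    intro h x
    rw [hTapp, hTapp]
    have key : ∀ g : G, (inner K (ρ' g v') (ρ' h x) : K) • ρ g v
        = (fun g' : G => ρ h ((inner K (ρ' g' v') x : K) • ρ g' v)) (h⁻¹ * g) := by
      intro g
      simp only [_root_.map_smul]
      congr 1
      · rw [← hρ'u h⁻¹ (ρ' g v') (ρ' h x), hρ'mul, hρ'mul, inv_mul_cancel, map_one]
        rfl
      · rw [hρmul, mul_inv_cancel_left]
    calc ∫ g, (inner K (ρ' g v') (ρ' h x) : K) • ρ g v ∂μ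
        = ∫ g, (fun g' : G => ρ h ((inner K (ρ' g' v') x : K) • ρ g' v)) (h⁻¹ * g) ∂μ := by
          simp_rw [key]
      _ = ∫ g, ρ h ((inner K (ρ' g v') x : K) • ρ g v) ∂μ :=
          integral_mul_left_eq_self (μ := μ)
            (fun g' : G => ρ h ((inner K (ρ' g' v') x : K) • ρ g' v)) h⁻¹
      _ = ρ h (∫ g, (inner K (ρ' g v') x : K) • ρ g v ∂μ) :=
          ContinuousLinearMap.integral_comp_comm (ρ h) (hint x)
  -- Schur's lemma: T = 0
  have hT0 : T = 0 := schur_aux ρ ρ' hρu hρ'u hVirr hV'irr hfd hniso T hTequi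
  -- conclude
  calc ∫ g, (starRingEnd K) ((starRingEnd K) (inner K u (ρ g v)))
        * (starRingEnd K) (inner K u' (ρ' g v')) ∂μ
      = ∫ g, (inner K u ((inner K (ρ' g v') u' : K) • ρ g v) : K) ∂μ := by
        congr 1
        ext g
        rw [inner_smul_right, RCLike.conj_conj, ← inner_conj_symm (ρ' g v') u']
        ring
    _ = inner K u (T u') := by rw [hTapp]; exact integral_inner (hint u') u
    _ = 0 := by rw [hT0]; simp
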